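/- Let $\mathscr{T}=\sum_{k=1}^{d}\lambda_k u_k^{(1)}\otimes\cdots\otimes u_k^{(p)}$ be an odeco tensor with $p\ge 3$, $\lambda_k>0$. Suppose $(\lambda, v^{(1)},\ldots,v^{(p)})$ is a singular value/vector tuple of $\mathscr{T}$ with $\lambda>0$ and such that $\prod_{q=1}^p\langle v^{(q)},u_k^{(q)}\rangle\ne 0$ for all $k$ in a nonempty set $S\subseteq[d]$ and $\langle v^{(q)},u_k^{(q)}\rangle=0$ for $k\notin S$. Then $\lambda=\big(\sum_{k\in S}\lambda_k^{-2/(p-2)}\big)^{-(p-2)/2}$ and $|\langle v^{(q)},u_k^{(q)}\rangle|=(\lambda/\lambda_k)^{1/(p-2)}$ for all $k\in S$ and all $q$. In particular $\lambda<\min_{k\in S}\lambda_k$ when $|S|\ge 2$. -/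

import Mathlib

open Finset Real

/-- Contraction of a `p`-th order tensor against the vectors `v j` in every mode `j ≠ q`,
leaving a vector in mode `q`. -/
noncomputable def contractExcept {p d : ℕ} (T : (Fin p → Fin d) → ℝ)
    (v : Fin p → Fin d → ℝ) (q : Fin p) (m : Fin d) : ℝ :=
  ∑ i : Fin p → Fin d,
    if i q = m then T i * ∏ j ∈ Finset.univ.erase q, v j (i j) else 0

lemma contract_eq {p d : ℕ} (T : (Fin p → Fin d) → ℝ) (v : Fin p → Fin d → ℝ)
    (lams : Fin d → ℝ) (u : Fin p → Fin d → Fin d → ℝ)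
    (hu : ∀ q k l, (∑ j, u q k j * u q l j) = if k = l then 1 else 0)
    (hT : ∀ i, T i = ∑ k, lams k * ∏ q, u q k (i q)) (q : Fin p) (l : Fin d) :
    ∑ m, contractExcept T v q m * u q l m
      = lams l * ∏ j ∈ Finset.univ.erase q, (∑ m, v j m * u j l m) := by
  have h1 : ∑ m, contractExcept T v q m * u q l m
      = ∑ i : Fin p → Fin d, T i * (∏ j ∈ Finset.univ.erase q, v j (i j)) * u q l (i q) := by
    simp only [contractExcept, Finset.sum_mul]
    rw [Finset.sum_comm]
    refine Finset.sum_congr rfl fun i _ => ?_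
    simp [ite_mul]
  rw [h1]
  have h2 : ∀ i : Fin p → Fin d,
      T i * (∏ j ∈ Finset.univ.erase q, v j (i j)) * u q l (i q)
      = ∑ k, lams k * ∏ j, (u j k (i j) * (if j = q then u q l (i j) else v j (i j))) := by
    intro i
    rw [hT, Finset.sum_mul, Finset.sum_mul]
    refine Finset.sum_congr rfl fun k _ => ?_
    rw [Finset.prod_mul_distrib]
    have e1 : ∏ j, (if j = q then u q l (i j) else v j (i j))
        = u q l (i q) * ∏ j ∈ Finset.univ.erase q, v j (i j) := by
      rw [← Finset.mul_prod_erase Finset.univ _ (Finset.mem_univ q), if_pos rfl]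
      congr 1
      exact Finset.prod_congr rfl fun j hj => if_neg (Finset.mem_erase.mp hj).1
    rw [e1]
    ring
  simp_rw [h2]
  rw [Finset.sum_comm]
  have h3 : ∀ k, ∑ i : Fin p → Fin d, lams k * ∏ j, (u j k (i j) * (if j = q then u q l (i j) else v j (i j)))
      = lams k * ((if k = l then (1:ℝ) else 0) * ∏ j ∈ Finset.univ.erase q, (∑ m, v j m * u j k m)) := by
    intro k
    rw [← Finset.mul_sum]
    congr 1
    rw [← Fintype.piFinset_univ, ← Finset.prod_univ_sum (fun _ => (Finset.univ : Finset (Fin d))) (fun j x => u j k x * if j = q then u q l x else v j x)]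
    rw [← Finset.mul_prod_erase Finset.univ _ (Finset.mem_univ q)]
    congr 1
    · simp only [if_pos rfl]
      exact hu q k l
    · refine Finset.prod_congr rfl fun j hj => ?_
      rw [Finset.sum_congr rfl fun x _ => by rw [if_neg (Finset.mem_erase.mp hj).1]]
      exact Finset.sum_congr rfl fun x _ => mul_comm _ _
  simp_rw [h3]
  simp

lemma parseval {d : ℕ} (u : Fin d → Fin d → ℝ)
    (hu : ∀ k l, (∑ j, u k j * u l j) = if k = l then 1 else 0) (v : Fin d → ℝ) :
    ∑ k, (∑ m, v m * u k m) ^ 2 = ∑ m, v m ^ 2 := by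
  have hA : (Matrix.of u) * (Matrix.of u).transpose = 1 := by
    ext k l
    simpa [Matrix.mul_apply, Matrix.one_apply] using hu k l
  have hA' : (Matrix.of u).transpose * (Matrix.of u) = 1 := mul_eq_one_comm.mp hA
  have hcol : ∀ m n : Fin d, (∑ k, u k m * u k n) = if m = n then 1 else 0 := by
    intro m n
    have := congrFun (congrFun hA' m) n
    simpa [Matrix.mul_apply, Matrix.one_apply] using this
  have h1 : ∀ k, (∑ m, v m * u k m) ^ 2 = ∑ m, ∑ n, v m * v n * (u k m * u k n) := by
    intro k
    rw [sq, Finset.sum_mul_sum]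
    exact Finset.sum_congr rfl fun m _ => Finset.sum_congr rfl fun n _ => by ring
  simp_rw [h1]
  rw [Finset.sum_comm]
  refine Finset.sum_congr rfl fun m _ => ?_
  rw [Finset.sum_comm]
  have h2 : ∀ n, ∑ k, v m * v n * (u k m * u k n) = v m * v n * (if m = n then 1 else 0) := by
    intro n
    rw [← Finset.mul_sum, hcol]
  simp_rw [h2]
  simp [mul_ite, sq]

/-- For an odeco tensor `T = ∑_k λ_k u_k^{(1)} ⊗ ⋯ ⊗ u_k^{(p)}` (`p ≥ 3`, `λ_k > 0`) and a
singular value/vector tuple `(λ, v^{(1)},…,v^{(p)})` with `λ > 0`, active set `S`: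
`λ = (∑_{k∈S} λ_k^{-2/(p-2)})^{-(p-2)/2}`, `|⟨v^{(q)}, u_k^{(q)}⟩| = (λ/λ_k)^{1/(p-2)}` for all
`k ∈ S` and all `q`, and `λ < min_{k∈S} λ_k` when `|S| ≥ 2`. -/
theorem stmt9 (p d : ℕ) (hp : 3 ≤ p)
    (lams : Fin d → ℝ) (hlams : ∀ k, 0 < lams k)
    (u : Fin p → Fin d → Fin d → ℝ)
    (hu : ∀ q k l, (∑ j, u q k j * u q l j) = if k = l then 1 else 0)
    (T : (Fin p → Fin d) → ℝ)
    (hT : ∀ i, T i = ∑ k, lams k * ∏ q, u q k (i q))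
    (lam : ℝ) (hlam : 0 < lam)
    (v : Fin p → Fin d → ℝ) (hvunit : ∀ q, ∑ m, v q m ^ 2 = 1)
    (hsing : ∀ q m, contractExcept T v q m = lam * v q m)
    (S : Finset (Fin d)) (hS : S.Nonempty)
    (hin : ∀ k ∈ S, ∀ q, (∑ m, v q m * u q k m) ≠ 0)
    (hout : ∀ k ∉ S, ∀ q : Fin p, (∑ m, v q m * u q k m) = 0) :
    lam = (∑ k ∈ S, lams k ^ (-(2 : ℝ) / ((p : ℝ) - 2))) ^ (-(((p : ℝ) - 2) / 2)) ∧
    (∀ k ∈ S, ∀ q, |∑ m, v q m * u q k m| = (lam / lams k) ^ ((1 : ℝ) / ((p : ℝ) - 2))) ∧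
    (2 ≤ S.card → ∀ k ∈ S, lam < lams k) := by
  have hp3 : (3:ℝ) ≤ (p:ℝ) := by exact_mod_cast hp
  have hprne : ((p:ℝ) - 2) ≠ 0 := by linarith
  have hprpos : (0:ℝ) < (p:ℝ) - 2 := by linarith
  have hepos : (0:ℝ) < (2:ℝ)/((p:ℝ)-2) := by positivity
  have q₀ : Fin p := ⟨0, by omega⟩
  -- key1 : singular equations in the u basis
  have key1 : ∀ q l, lams l * ∏ j ∈ Finset.univ.erase q, (∑ m, v j m * u j l m)
      = lam * (∑ m, v q m * u q l m) := by
    intro q l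
    rw [← contract_eq T v lams u hu hT q l]
    simp only [hsing, mul_assoc, ← Finset.mul_sum]
  have keyA : ∀ q l, lams l * ∏ j, (∑ m, v j m * u j l m)
      = lam * (∑ m, v q m * u q l m) ^ 2 := by
    intro q l
    rw [← Finset.mul_prod_erase Finset.univ _ (Finset.mem_univ q)]
    rw [show lams l * ((∑ m, v q m * u q l m) * ∏ j ∈ Finset.univ.erase q, (∑ m, v j m * u j l m))
        = (∑ m, v q m * u q l m) * (lams l * ∏ j ∈ Finset.univ.erase q, (∑ m, v j m * u j l m))
        from by ring, key1 q l]
    ring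
  have tpos : ∀ l ∈ S, 0 < (∑ m, v q₀ m * u q₀ l m) ^ 2 := fun l hl =>
    lt_of_le_of_ne (sq_nonneg _) (Ne.symm (pow_ne_zero 2 (hin l hl q₀)))
  have keyB : ∀ l ∈ S, ∀ q, (∑ m, v q m * u q l m) ^ 2 = (∑ m, v q₀ m * u q₀ l m) ^ 2 := by
    intro l hl q
    exact mul_left_cancel₀ (ne_of_gt hlam) ((keyA q l).symm.trans (keyA q₀ l))
  have keyP : ∀ l ∈ S, ∏ j, (∑ m, v j m * u j l m)
      = ((∑ m, v q₀ m * u q₀ l m) ^ 2) ^ ((p:ℝ)/2) := by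
    intro l hl
    have hsq : (∏ j, (∑ m, v j m * u j l m)) ^ 2
        = ((∑ m, v q₀ m * u q₀ l m) ^ 2) ^ (p:ℕ) := by
      rw [← Finset.prod_pow, Finset.prod_congr rfl fun j _ => keyB l hl j,
        Finset.prod_const, Finset.card_univ, Fintype.card_fin]
    have hPpos : 0 < ∏ j, (∑ m, v j m * u j l m) := by
      nlinarith [keyA q₀ l, hlam, hlams l, tpos l hl]
    have ht0 : (0:ℝ) ≤ (∑ m, v q₀ m * u q₀ l m) ^ 2 := sq_nonneg _
    calc ∏ j, (∑ m, v j m * u j l m)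
        = Real.sqrt ((∏ j, (∑ m, v j m * u j l m)) ^ 2) := (Real.sqrt_sq hPpos.le).symm
      _ = Real.sqrt (((∑ m, v q₀ m * u q₀ l m) ^ 2) ^ (p:ℕ)) := by rw [hsq]
      _ = Real.sqrt (((∑ m, v q₀ m * u q₀ l m) ^ 2) ^ ((p:ℝ))) := by
            rw [Real.rpow_natCast]
      _ = (((∑ m, v q₀ m * u q₀ l m) ^ 2) ^ ((p:ℝ))) ^ ((1:ℝ)/2) := by
            rw [← Real.sqrt_eq_rpow]
      _ = ((∑ m, v q₀ m * u q₀ l m) ^ 2) ^ ((p:ℝ) * (1/2)) := (Real.rpow_mul ht0 _ _).symm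
      _ = ((∑ m, v q₀ m * u q₀ l m) ^ 2) ^ ((p:ℝ)/2) := by rw [mul_one_div]
  have keyT : ∀ l ∈ S, (∑ m, v q₀ m * u q₀ l m) ^ 2
      = (lam / lams l) ^ ((2:ℝ)/((p:ℝ)-2)) := by
    intro l hl
    have ht : 0 < (∑ m, v q₀ m * u q₀ l m) ^ 2 := tpos l hl
    have h2 : lam * ((∑ m, v q₀ m * u q₀ l m) ^ 2)
        = lams l * ((∑ m, v q₀ m * u q₀ l m) ^ 2) ^ ((p:ℝ)/2) := by
      rw [← keyP l hl]; linarith [keyA q₀ l]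
    have h1 : lam / lams l = ((∑ m, v q₀ m * u q₀ l m) ^ 2) ^ (((p:ℝ)-2)/2) := by
      rw [show ((p:ℝ)-2)/2 = (p:ℝ)/2 - 1 by ring, Real.rpow_sub ht, Real.rpow_one,
        div_eq_div_iff (ne_of_gt (hlams l)) (ne_of_gt ht)]
      linarith [h2]
    rw [h1, ← Real.rpow_mul ht.le,
      show (((p:ℝ)-2)/2) * ((2:ℝ)/((p:ℝ)-2)) = 1 from by field_simp, Real.rpow_one]
  have habs : ∀ l ∈ S, ∀ q, |∑ m, v q m * u q l m|
      = (lam / lams l) ^ ((1:ℝ)/((p:ℝ)-2)) := by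
    intro l hl q
    rw [← Real.sqrt_sq_eq_abs, keyB l hl q, keyT l hl, Real.sqrt_eq_rpow,
      ← Real.rpow_mul (div_nonneg hlam.le (hlams l).le)]
    congr 1
    ring
  have hsum1 : ∑ l ∈ S, (lam / lams l) ^ ((2:ℝ)/((p:ℝ)-2)) = 1 := by
    have hpar := parseval (u q₀) (hu q₀) (v q₀)
    rw [hvunit q₀] at hpar
    rw [← hpar, ← Finset.sum_subset (Finset.subset_univ S)
      (fun l _ hl => by rw [hout l hl q₀]; ring)]
    exact Finset.sum_congr rfl fun l hl => (keyT l hl).symm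
  refine ⟨?_, habs, ?_⟩
  · have hlamE : lam ^ ((2:ℝ)/((p:ℝ)-2)) ≠ 0 := ne_of_gt (Real.rpow_pos_of_pos hlam _)
    have hA : ∑ k ∈ S, lams k ^ (-(2:ℝ)/((p:ℝ)-2)) = lam ^ (-((2:ℝ)/((p:ℝ)-2))) := by
      have e : ∀ k ∈ S, lams k ^ (-(2:ℝ)/((p:ℝ)-2))
          = (lam / lams k) ^ ((2:ℝ)/((p:ℝ)-2)) * lam ^ (-((2:ℝ)/((p:ℝ)-2))) := by
        intro k hk
        rw [Real.div_rpow hlam.le (hlams k).le, Real.rpow_neg hlam.le, neg_div,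
          Real.rpow_neg (hlams k).le]
        field_simp
      rw [Finset.sum_congr rfl e, ← Finset.sum_mul, hsum1, one_mul]
    rw [hA, ← Real.rpow_mul hlam.le,
      show (-((2:ℝ)/((p:ℝ)-2))) * (-(((p:ℝ)-2)/2)) = 1 from by field_simp, Real.rpow_one]
  · intro hcard k hk
    obtain ⟨k', hk', hkk'⟩ := Finset.exists_mem_ne (by omega : 1 < S.card) k
    have hle : (lam/lams k) ^ ((2:ℝ)/((p:ℝ)-2)) + (lam/lams k') ^ ((2:ℝ)/((p:ℝ)-2))
        ≤ ∑ l ∈ S, (lam / lams l) ^ ((2:ℝ)/((p:ℝ)-2)) := by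
      have hsub : ({k, k'} : Finset (Fin d)) ⊆ S := by
        intro x hx
        rcases Finset.mem_insert.mp hx with rfl | hx
        · exact hk
        · rw [Finset.mem_singleton.mp hx]; exact hk'
      have := Finset.sum_le_sum_of_subset_of_nonneg
        (f := fun l => (lam / lams l) ^ ((2:ℝ)/((p:ℝ)-2))) hsub
        (fun l _ _ => (Real.rpow_pos_of_pos (div_pos hlam (hlams l)) ((2:ℝ)/((p:ℝ)-2))).le)
      rwa [Finset.sum_pair (Ne.symm hkk')] at this
    have hpos' : 0 < (lam/lams k') ^ ((2:ℝ)/((p:ℝ)-2)) :=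
      Real.rpow_pos_of_pos (div_pos hlam (hlams k')) _
    have hlt1 : (lam/lams k) ^ ((2:ℝ)/((p:ℝ)-2)) < 1 := by linarith [hsum1]
    have hbase : lam / lams k < 1 := by
      by_contra h
      push_neg at h
      have h1 : ((1:ℝ)) ^ ((2:ℝ)/((p:ℝ)-2)) ≤ (lam/lams k) ^ ((2:ℝ)/((p:ℝ)-2)) :=
        Real.rpow_le_rpow zero_le_one h hepos.le
      rw [Real.one_rpow] at h1
      linarith
    exact (div_lt_one (hlams k)).mp hbase
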